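/- For all regular expressions p and q over an alphabet Σ, the set of pairs of languages of their string derivatives, { (L(δ_w p), L(δ_w q)) | w a string over Σ }, is finite. -/
import Mathlib

open RegularExpression Computability

variable {α : Type*}

/-- Left quotient of a language by a word. -/
def lq (L : Language α) (w : List α) : Language α := {x | w ++ x ∈ L}

lemma mem_lq {L : Language α} {w x : List α} : x ∈ lq L w ↔ w ++ x ∈ L := Iff.rfl

lemma mem_sSup' {S : Set (Language α)} {x : List α} : x ∈ sSup S ↔ ∃ l ∈ S, x ∈ l := by
  constructor
  · intro h; exact h
  · intro h; exact h

lemma lq_zero (w : List α) : lq (0 : Language α) w = 0 := rfl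

lemma lq_nil (L : Language α) : lq L [] = L := rfl

lemma lq_add (L M : Language α) (w : List α) : lq (L + M) w = lq L w + lq M w := rfl

lemma lq_mul (L M : Language α) (w : List α) :
    lq (L * M) w = lq L w * M + sSup {N | ∃ u v, w = u ++ v ∧ u ∈ L ∧ N = lq M v} := by
  ext x
  simp only [mem_lq, Language.mem_mul, Language.mem_add, mem_sSup']
  constructor
  · rintro ⟨a, ha, b, hb, hab⟩
    rcases List.append_eq_append_iff.1 hab with ⟨a', rfl, rfl⟩ | ⟨c', rfl, rfl⟩
    · exact Or.inr ⟨lq M a', ⟨a, a', rfl, ha, rfl⟩, hb⟩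
    · exact Or.inl ⟨c', ha, b, hb, rfl⟩
  · rintro (⟨x₁, h₁, x₂, h₂, rfl⟩ | ⟨N, ⟨u, v, rfl, hu, rfl⟩, hx⟩)
    · exact ⟨w ++ x₁, h₁, x₂, h₂, by simp⟩
    · exact ⟨u, hu, v ++ x, hx, by simp⟩

lemma star_split {L : Language α} : ∀ (S : List (List α)), (∀ y ∈ S, y ∈ L) →
    ∀ w x : List α, w ≠ [] → w ++ x = S.flatten →
    ∃ u v x₁ x₂, w = u ++ v ∧ x = x₁ ++ x₂ ∧ v ≠ [] ∧ u ∈ L∗ ∧ v ++ x₁ ∈ L ∧ x₂ ∈ L∗ := by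
  intro S
  induction S with
  | nil =>
    intro _ w x hw h
    simp only [List.flatten_nil, List.append_eq_nil_iff] at h
    exact absurd h.1 hw
  | cons y S ih =>
    intro hmem w x hw h
    rw [List.flatten_cons] at h
    rcases List.append_eq_append_iff.1 h.symm with ⟨a', ha, hfl⟩ | ⟨c', hy, hx⟩
    · rcases eq_or_ne a' [] with rfl | ha'
      · refine ⟨[], w, [], S.flatten, by simp, by simp [hfl], hw, Language.nil_mem_kstar L, ?_, ?_⟩
        · simpa [ha] using hmem y (by simp)
        · exact Language.join_mem_kstar fun z hz => hmem z (by simp [hz])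
      · obtain ⟨u, v, x₁, x₂, h1, h2, h3, h4, h5, h6⟩ :=
          ih (fun z hz => hmem z (by simp [hz])) a' x ha' hfl.symm
        refine ⟨y ++ u, v, x₁, x₂, by simp [ha, h1], h2, h3, ?_, h5, h6⟩
        obtain ⟨T, hT, hTm⟩ := Language.mem_kstar.1 h4
        refine Language.mem_kstar.2 ⟨y :: T, by simp [hT], fun z hz => ?_⟩
        rcases List.mem_cons.1 hz with rfl | hz
        · exact hmem z (by simp)
        · exact hTm z hz
    · refine ⟨[], w, c', S.flatten, by simp, hx, hw, Language.nil_mem_kstar L, ?_, ?_⟩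
      · rw [← hy]; exact hmem y (by simp)
      · exact Language.join_mem_kstar fun z hz => hmem z (by simp [hz])

lemma lq_star (L : Language α) {w : List α} (hw : w ≠ []) :
    lq (L∗) w = sSup {N | ∃ u v, w = u ++ v ∧ v ≠ [] ∧ u ∈ L∗ ∧ N = lq L v * L∗} := by
  ext x
  simp only [mem_lq, mem_sSup']
  constructor
  · intro h
    obtain ⟨S, hS, hmem⟩ := Language.mem_kstar.1 h
    obtain ⟨u, v, x₁, x₂, h1, h2, h3, h4, h5, h6⟩ := star_split S hmem w x hw hS
    refine ⟨lq L v * L∗, ⟨u, v, h1, h3, h4, rfl⟩, ?_⟩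
    rw [h2]
    exact Language.mem_mul.2 ⟨x₁, h5, x₂, h6, rfl⟩
  · rintro ⟨N, ⟨u, v, rfl, hv, hu, rfl⟩, hx⟩
    obtain ⟨x₁, h₁, x₂, h₂, rfl⟩ := Language.mem_mul.1 hx
    obtain ⟨T, rfl, hTm⟩ := Language.mem_kstar.1 hu
    obtain ⟨T₂, rfl, hT₂⟩ := Language.mem_kstar.1 h₂
    have : T.flatten ++ v ++ (x₁ ++ T₂.flatten) = (T ++ [v ++ x₁] ++ T₂).flatten := by
      simp
    rw [this]
    refine Language.join_mem_kstar fun z hz => ?_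
    simp only [List.mem_append, List.mem_singleton] at hz
    rcases hz with (hz | rfl) | hz
    exacts [hTm z hz, h₁, hT₂ z hz]

/-- The set of left quotients of the language of a regular expression is finite. -/
lemma finite_lq (p : RegularExpression α) : (Set.range (lq p.matches')).Finite := by
  induction p with
  | zero =>
    apply Set.Finite.subset (Set.finite_singleton (0 : Language α))
    rintro _ ⟨w, rfl⟩; simp [matches'_zero, lq_zero]
  | epsilon =>
    apply Set.Finite.subset ((Set.finite_singleton (0 : Language α)).insert 1)
    rintro _ ⟨w, rfl⟩
    rcases w with _ | ⟨a, t⟩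
    · exact Set.mem_insert_iff.2 (Or.inl (by simp [lq_nil]))
    · refine Set.mem_insert_iff.2 (Or.inr ?_)
      simp only [Set.mem_singleton_iff]
      ext x
      simp [mem_lq, matches'_epsilon, Language.mem_one, Language.notMem_zero]
  | char a =>
    apply Set.Finite.subset
      (((Set.finite_singleton ({[a]} : Language α)).insert 1).insert 0)
    rintro _ ⟨w, rfl⟩
    rcases w with _ | ⟨b, t⟩
    · refine Set.mem_insert_iff.2 (Or.inr (Set.mem_insert_iff.2 (Or.inr ?_)))
      simp [lq_nil, matches'_char]
    · by_cases h : b = a ∧ t = []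
      · obtain ⟨rfl, rfl⟩ := h
        refine Set.mem_insert_iff.2 (Or.inr (Set.mem_insert_iff.2 (Or.inl ?_)))
        ext x
        simp only [mem_lq, matches'_char, Language.mem_one, List.cons_append, List.nil_append]
        constructor
        · intro hx
          have hx' : b :: x = [b] := hx
          simpa using hx'
        · rintro rfl; rfl
      · refine Set.mem_insert_iff.2 (Or.inl ?_)
        ext x
        simp only [mem_lq, matches'_char, Set.mem_singleton_iff, List.cons_append,
          Language.notMem_zero, iff_false]
        intro hx
        have hx' : b :: (t ++ x) = [a] := hx
        simp only [List.cons.injEq, List.append_eq_nil_iff] at hx'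
        exact h ⟨hx'.1, hx'.2.1⟩
  | plus P Q ihP ihQ =>
    apply Set.Finite.subset (Set.Finite.image2 (· + ·) ihP ihQ)
    rintro _ ⟨w, rfl⟩
    exact ⟨lq P.matches' w, ⟨w, rfl⟩, lq Q.matches' w, ⟨w, rfl⟩, rfl⟩
  | comp P Q ihP ihQ =>
    apply Set.Finite.subset
      (Set.Finite.image2 (fun A S => A * Q.matches' + sSup S) ihP ihQ.finite_subsets)
    rintro _ ⟨w, rfl⟩
    refine ⟨lq P.matches' w, ⟨w, rfl⟩,
      {N | ∃ u v, w = u ++ v ∧ u ∈ P.matches' ∧ N = lq Q.matches' v}, ?_, ?_⟩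
    · rintro N ⟨u, v, rfl, hu, rfl⟩; exact ⟨v, rfl⟩
    · exact (lq_mul P.matches' Q.matches' w).symm
  | star P ihP =>
    apply Set.Finite.subset ((Set.Finite.image
      (fun S => sSup ((· * P.matches'∗) '' S)) ihP.finite_subsets).insert (P.matches'∗))
    rintro _ ⟨w, rfl⟩
    rcases eq_or_ne w [] with rfl | hw
    · exact Set.mem_insert_iff.2 (Or.inl (by rw [lq_nil]; rfl))
    · refine Set.mem_insert_iff.2 (Or.inr ?_)
      refine ⟨{A | ∃ u v, w = u ++ v ∧ v ≠ [] ∧ u ∈ P.matches'∗ ∧ A = lq P.matches' v},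
        ?_, ?_⟩
      · rintro A ⟨u, v, _, _, _, hA⟩
        exact ⟨v, hA.symm⟩
      · refine Eq.symm ?_
        show lq (P.matches'∗) w = _
        rw [lq_star P.matches' hw]
        congr 1
        ext N
        simp only [Set.mem_setOf_eq, Set.mem_image]
        constructor
        · rintro ⟨u, v, rfl, hv, hu, rfl⟩
          exact ⟨lq P.matches' v, ⟨u, v, rfl, hv, hu, rfl⟩, rfl⟩
        · rintro ⟨A, ⟨u, v, rfl, hv, hu, rfl⟩, rfl⟩
          exact ⟨u, v, rfl, hv, hu, rfl⟩

/-- The derivative of a regular expression with respect to a string,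
folding the Brzozowski character derivative over the string. -/
def derivs [DecidableEq α] (p : RegularExpression α) (w : List α) : RegularExpression α :=
  w.foldl RegularExpression.deriv p

/-- `w` is a counterexample for `p` and `q` if exactly one of them accepts `w`. -/
def Counterexample (p q : RegularExpression α) (w : List α) : Prop :=
  Xor' (w ∈ p.matches') (w ∈ q.matches')

/-- A string `w` is reducible (for `p` and `q`) if `w = s ++ t ++ u` with `t` nonempty,
`L(δ_s p) = L(δ_{s++t} p)` and `L(δ_s q) = L(δ_{s++t} q)`. -/
def Reducible [DecidableEq α] (p q : RegularExpression α) (w : List α) : Prop :=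
  ∃ s t u : List α, w = s ++ t ++ u ∧ t ≠ [] ∧
    (derivs p s).matches' = (derivs p (s ++ t)).matches' ∧
    (derivs q s).matches' = (derivs q (s ++ t)).matches'

/-- `Sync s p q` : `p` and `q` have no irreducible counterexample having `s` as a prefix. -/
def Sync [DecidableEq α] (s : List α) (p q : RegularExpression α) : Prop :=
  ∀ w : List α, s <+: w → Counterexample p q w → Reducible p q w

lemma derivs_rmatch [DecidableEq α] (w : List α) :
    ∀ (p : RegularExpression α) (x : List α), (derivs p w).rmatch x = p.rmatch (w ++ x) := by
  induction w with
  | nil => intro p x; rfl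
  | cons a w ih => intro p x; exact ih (p.deriv a) x

lemma derivs_matches' [DecidableEq α] (p : RegularExpression α) (w : List α) :
    (derivs p w).matches' = lq p.matches' w := by
  ext x
  rw [mem_lq, ← rmatch_iff_matches', ← rmatch_iff_matches', derivs_rmatch]

theorem finite_deriv_language_pairs [DecidableEq α] (p q : RegularExpression α) :
    (Set.range fun w : List α => ((derivs p w).matches', (derivs q w).matches')).Finite := by
  apply Set.Finite.subset ((finite_lq p).prod (finite_lq q))
  rintro _ ⟨w, rfl⟩
  exact ⟨⟨w, (derivs_matches' p w).symm⟩, ⟨w, (derivs_matches' q w).symm⟩⟩
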